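/- arXiv:1311.6317 — 3 statements merged into one kernel-verified Lean document; each statement's English description precedes it below -/
import Mathlib

section
/- Let k be an algebraically closed field of characteristic p > 0 and let r ≥ 1. For every pair of sequences (M_n)_{n≥0} with M_n ∈ U_r(k((t))^{p^n}) and (N_n)_{n≥0} with N_n ∈ U_r(k((s))^{p^n}), there exist sequences (A_n) with A_n ∈ U_r(k[t,t⁻¹]^{p^n}), (g_n) with g_n ∈ U_r(k((t))^{p^n}), and (h_n) with h_n ∈ U_r(k((s))^{p^n}) such that for all n ≥ 0: M_n = g_n · A_n · g_{n+1}⁻¹ in GL_r(k((t))) and N_n = h_n · ι(A_n) · h_{n+1}⁻¹ in GL_r(k((s))). (The joint restriction map from R¹lim_n U_r(k[t,t⁻¹]^{p^n}) to R¹lim_n U_r(k((t))^{p^n}) × R¹lim_n U_r(k((t⁻¹))^{p^n}) is surjective.) -/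
/-- `M ∈ U_r(k((t))^{pⁿ})`: an upper-triangular matrix with all diagonal entries `1`
whose entries lie in the subring `k((t))^{pⁿ}` (support consisting of multiples of
`pⁿ`).  The same condition, read in the variable `s`, defines `U_r(k((s))^{pⁿ})`. -/
def MemUrLaurentSeriesPow (k : Type*) [Field k] (p n r : ℕ)
    (M : Matrix (Fin r) (Fin r) (LaurentSeries k)) : Prop :=
  (∀ i j : Fin r, (j : ℕ) < (i : ℕ) → M i j = 0) ∧
  (∀ i : Fin r, M i i = 1) ∧
  (∀ i j : Fin r, ∀ m ∈ (M i j).support, ((p : ℤ) ^ n) ∣ m)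

/-- `M ∈ U_r(k[t,t⁻¹]^{pⁿ})`: additionally, all entries are Laurent polynomials
(finite support). -/
def MemUrLaurentPolyPow (k : Type*) [Field k] (p n r : ℕ)
    (M : Matrix (Fin r) (Fin r) (LaurentSeries k)) : Prop :=
  (∀ i j : Fin r, (j : ℕ) < (i : ℕ) → M i j = 0) ∧
  (∀ i : Fin r, M i i = 1) ∧
  (∀ i j : Fin r, (M i j).support.Finite ∧ ∀ m ∈ (M i j).support, ((p : ℤ) ^ n) ∣ m)

/-- `A'` is obtained from `A` by applying, entrywise, the embedding
`ι : k[t,t⁻¹] → k((s))`, `t ↦ s⁻¹` (coefficientwise reversal). -/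
def IsRevMatSeq (k : Type*) [Field k] (r : ℕ)
    (A A' : ℕ → Matrix (Fin r) (Fin r) (LaurentSeries k)) : Prop :=
  ∀ n (i j : Fin r) (m : ℤ), (A' n i j).coeff m = (A n i j).coeff (-m)



namespace JointSurj

variable {k : Type*} [Field k]

/-- support divisibility predicate -/
def SuppDvd (p n : ℕ) (x : LaurentSeries k) : Prop := ∀ m ∈ x.support, ((p : ℤ) ^ n) ∣ m

theorem suppDvd_def {p n : ℕ} {x : LaurentSeries k} :
    SuppDvd p n x ↔ ∀ m : ℤ, ¬ ((p : ℤ) ^ n ∣ m) → x.coeff m = 0 := by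
  constructor
  · intro h m hm
    by_contra hc
    exact hm (h m ((HahnSeries.mem_support x m).mpr hc))
  · intro h m hm
    by_contra hc
    exact (HahnSeries.mem_support x m).mp hm (h m hc)

theorem suppDvd_zero (p n : ℕ) : SuppDvd p n (0 : LaurentSeries k) := by
  intro m hm; simp [HahnSeries.mem_support] at hm

theorem suppDvd_one (p n : ℕ) : SuppDvd p n (1 : LaurentSeries k) := by
  intro m hm
  rw [HahnSeries.mem_support, HahnSeries.coeff_one] at hm
  rcases eq_or_ne m 0 with h | h
  · exact h ▸ dvd_zero _
  · simp [h] at hm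

theorem suppDvd_add {p n : ℕ} {x y : LaurentSeries k} (hx : SuppDvd p n x)
    (hy : SuppDvd p n y) : SuppDvd p n (x + y) := by
  rw [suppDvd_def] at *
  intro m hm
  rw [HahnSeries.coeff_add, hx m hm, hy m hm, add_zero]

theorem suppDvd_sub {p n : ℕ} {x y : LaurentSeries k} (hx : SuppDvd p n x)
    (hy : SuppDvd p n y) : SuppDvd p n (x - y) := by
  rw [suppDvd_def] at *
  intro m hm
  rw [HahnSeries.coeff_sub, hx m hm, hy m hm, sub_zero]

theorem suppDvd_mul {p n : ℕ} {x y : LaurentSeries k} (hx : SuppDvd p n x)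
    (hy : SuppDvd p n y) : SuppDvd p n (x * y) := by
  intro m hm
  obtain ⟨a, ha, b, hb, rfl⟩ := HahnSeries.support_mul_subset hm
  exact dvd_add (hx a ha) (hy b hb)

theorem suppDvd_of_succ {p n : ℕ} {x : LaurentSeries k} (hx : SuppDvd p (n + 1) x) :
    SuppDvd p n x := fun m hm => dvd_trans (pow_dvd_pow _ (Nat.le_succ n)) (hx m hm)

theorem suppDvd_sum {p n : ℕ} {α : Type*} (s : Finset α) (f : α → LaurentSeries k)
    (h : ∀ a ∈ s, SuppDvd p n (f a)) : SuppDvd p n (∑ a ∈ s, f a) := by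
  classical
  induction s using Finset.induction with
  | empty => simpa using suppDvd_zero p n
  | insert _ _ hni ih =>
    rw [Finset.sum_insert hni]
    exact suppDvd_add (h _ (Finset.mem_insert_self _ _))
      (ih fun a ha => h a (Finset.mem_insert_of_mem ha))

theorem coeff_sum {α : Type*} (s : Finset α) (f : α → LaurentSeries k) (m : ℤ) :
    (∑ a ∈ s, f a).coeff m = ∑ a ∈ s, (f a).coeff m := by
  classical
  induction s using Finset.induction with
  | empty => simp
  | insert _ _ hni ih => rw [Finset.sum_insert hni, Finset.sum_insert hni, HahnSeries.coeff_add, ih]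



theorem isPWO_Ioi_int : (Set.Ioi (0 : ℤ)).IsPWO := by
  have h1 : (Set.univ : Set ℕ).IsWF := Set.isWF_univ_iff.mpr inferInstance
  have h2 : ((fun n : ℕ => (n : ℤ) + 1) '' Set.univ).IsPWO :=
    h1.isPWO.image_of_monotone (fun a b hab => by simp; omega)
  refine h2.mono ?_
  intro j hj
  rw [Set.mem_Ioi] at hj
  refine ⟨(j - 1).toNat, Set.mem_univ _, ?_⟩
  show ((j - 1).toNat : ℤ) + 1 = j
  omega

variable (p : ℕ)

theorem nu_dvd (j : ℤ) : (p : ℤ) ^ (padicValInt p j) ∣ j := by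
  rw [padicValInt]
  have h : (p : ℕ) ^ padicValNat p j.natAbs ∣ j.natAbs := pow_padicValNat_dvd
  have h2 : ((p ^ padicValNat p j.natAbs : ℕ) : ℤ) ∣ (j.natAbs : ℤ) :=
    Int.natCast_dvd_natCast.mpr h
  rw [Int.dvd_natAbs] at h2
  exact_mod_cast h2

theorem nu_lt_of_not_dvd {n : ℕ} [Fact p.Prime] {j : ℤ} (h : ¬ ((p : ℤ) ^ n ∣ j)) :
    j ≠ 0 ∧ padicValInt p j < n := by
  have hj : j ≠ 0 := by rintro rfl; exact h (dvd_zero _)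
  refine ⟨hj, ?_⟩
  by_contra hc
  push_neg at hc
  exact h (dvd_trans (pow_dvd_pow _ hc) (nu_dvd p j))

theorem dvd_of_le_nu {n : ℕ} {j : ℤ} (h : n ≤ padicValInt p j) : (p : ℤ) ^ n ∣ j :=
  dvd_trans (pow_dvd_pow _ h) (nu_dvd p j)

theorem nu_gt_of_dvd {n : ℕ} [Fact p.Prime] {j : ℤ} (hj : j ≠ 0)
    (h : (p : ℤ) ^ n ∣ j) : n ≤ padicValInt p j := by
  rw [padicValInt]
  rw [← padicValNat_dvd_iff_le (Int.natAbs_ne_zero.mpr hj)]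
  have : ((p ^ n : ℕ) : ℤ) ∣ j := by exact_mod_cast h
  rw [← Int.dvd_natAbs] at this
  exact_mod_cast this

theorem nu_neg (j : ℤ) : padicValInt p (-j) = padicValInt p j := by
  simp [padicValInt]



variable {k : Type*} [Field k]

section Scalar

variable (p : ℕ) (f e : ℕ → LaurentSeries k)

/-- partial sums -/
def Fp (n : ℕ) : LaurentSeries k := ∑ m ∈ Finset.range n, f m

/-- coefficients of the Laurent-polynomial corrections -/
def aCoeff (n : ℕ) (j : ℤ) : k :=
  if j ≠ 0 ∧ padicValInt p j = n then
    (if j < 0 then (Fp f (n + 1)).coeff j else (Fp e (n + 1)).coeff (-j))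
  else 0

theorem aCoeff_support_finite (n : ℕ) : (Function.support (aCoeff p f e n)).Finite := by
  refine Set.Finite.subset ((Set.finite_Icc ((Fp f (n+1)).order) (-1)).union
    (Set.finite_Icc 1 (-(Fp e (n+1)).order))) ?_
  intro j hj
  rw [Function.mem_support, aCoeff] at hj
  split_ifs at hj with h1 h2
  · left
    refine Set.mem_Icc.mpr ⟨?_, by omega⟩
    by_contra hc
    exact hj (HahnSeries.coeff_eq_zero_of_lt_order (by omega))
  · right
    have hj0 : j ≠ 0 := h1.1
    refine Set.mem_Icc.mpr ⟨by omega, ?_⟩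
    by_contra hc
    exact hj (HahnSeries.coeff_eq_zero_of_lt_order (by omega))
  · exact absurd rfl hj

/-- the Laurent polynomial corrections -/
def aa (n : ℕ) : LaurentSeries k := ⟨aCoeff p f e n, (aCoeff_support_finite p f e n).isPWO⟩

/-- the reversed corrections -/
def aa' (n : ℕ) : LaurentSeries k :=
  ⟨fun m => aCoeff p f e n (-m),
    (((aCoeff_support_finite p f e n).preimage (neg_injective.injOn)).subset
      (fun m hm => by simpa using hm)).isPWO⟩

@[simp] theorem aa_coeff (n : ℕ) (j : ℤ) : (aa p f e n).coeff j = aCoeff p f e n j := rfl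

@[simp] theorem aa'_coeff (n : ℕ) (j : ℤ) : (aa' p f e n).coeff j = aCoeff p f e n (-j) := rfl

/-- power-series head for the `t`-side -/
def gam (j : ℤ) : k :=
  if 0 < j then (Fp f (padicValInt p j + 1)).coeff j - (Fp e (padicValInt p j + 1)).coeff (-j)
  else 0

def g0 : LaurentSeries k :=
  ⟨gam p f e, (isPWO_Ioi_int.mono (fun j hj => by
    rw [Function.mem_support, gam] at hj
    rw [Set.mem_Ioi]
    by_contra hc
    exact hj (if_neg (by omega))))⟩

/-- power-series head for the `s`-side -/
def eta (m : ℤ) : k :=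
  if 0 < m then (Fp e (padicValInt p m + 1)).coeff m - (Fp f (padicValInt p m + 1)).coeff (-m)
  else 0

def h0 : LaurentSeries k :=
  ⟨eta p f e, (isPWO_Ioi_int.mono (fun j hj => by
    rw [Function.mem_support, eta] at hj
    rw [Set.mem_Ioi]
    by_contra hc
    exact hj (if_neg (by omega))))⟩

noncomputable def gg (n : ℕ) : LaurentSeries k := g0 p f e + ∑ m ∈ Finset.range n, (aa p f e m - f m)

noncomputable def hh (n : ℕ) : LaurentSeries k := h0 p f e + ∑ m ∈ Finset.range n, (aa' p f e m - e m)

theorem gg_eq (n : ℕ) : f n = gg p f e n + aa p f e n - gg p f e (n + 1) := by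
  rw [gg, gg, Finset.sum_range_succ]
  ring

theorem hh_eq (n : ℕ) : e n = hh p f e n + aa' p f e n - hh p f e (n + 1) := by
  rw [hh, hh, Finset.sum_range_succ]
  ring

@[simp] theorem g0_coeff (j : ℤ) : (g0 p f e).coeff j = gam p f e j := rfl
@[simp] theorem h0_coeff (j : ℤ) : (h0 p f e).coeff j = eta p f e j := rfl

theorem aa_support_finite (n : ℕ) : (aa p f e n).support.Finite :=
  aCoeff_support_finite p f e n

theorem suppDvd_aa (n : ℕ) : SuppDvd p n (aa p f e n) := by
  intro j hj
  rw [HahnSeries.mem_support, aa_coeff, aCoeff] at hj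
  by_cases h1 : j ≠ 0 ∧ padicValInt p j = n
  · exact h1.2 ▸ nu_dvd p j
  · rw [if_neg h1] at hj
    exact absurd rfl hj

theorem suppDvd_aa' (n : ℕ) : SuppDvd p n (aa' p f e n) := by
  intro j hj
  rw [HahnSeries.mem_support, aa'_coeff, aCoeff] at hj
  by_cases h1 : -j ≠ 0 ∧ padicValInt p (-j) = n
  · have : (p : ℤ) ^ n ∣ -j := h1.2 ▸ nu_dvd p (-j)
    exact (dvd_neg).mp this
  · rw [if_neg h1] at hj
    exact absurd rfl hj

theorem suppDvd_gg [Fact p.Prime] (hf : ∀ n, SuppDvd p n (f n)) (n : ℕ) :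
    SuppDvd p n (gg p f e n) := by
  rw [suppDvd_def]
  intro j hdvd
  obtain ⟨hj0, hlt⟩ := nu_lt_of_not_dvd p hdvd
  set ν0 := padicValInt p j with hν0
  have hcoeff : (gg p f e n).coeff j =
      gam p f e j + ∑ m ∈ Finset.range n, (aCoeff p f e m j - (f m).coeff j) := by
    rw [gg, HahnSeries.coeff_add, coeff_sum, g0_coeff]
    simp only [HahnSeries.coeff_sub, aa_coeff]
  have hsum1 : ∑ m ∈ Finset.range n, aCoeff p f e m j = aCoeff p f e ν0 j := by
    apply Finset.sum_eq_single ν0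
    · intro m _ hm
      rw [aCoeff, if_neg]
      intro hcond
      omega
    · intro hnotmem
      exact absurd (Finset.mem_range.mpr (by omega)) hnotmem
  have hsum2 : ∑ m ∈ Finset.range n, (f m).coeff j = (Fp f (ν0 + 1)).coeff j := by
    rw [Fp, coeff_sum]
    symm
    apply Finset.sum_subset (Finset.range_subset_range.mpr (by omega))
    intro m _ hm
    rw [Finset.mem_range] at hm
    apply (suppDvd_def.mp (hf m)) j
    intro hdvdm
    have := nu_gt_of_dvd p hj0 hdvdm
    omega
  rw [hcoeff, Finset.sum_sub_distrib, hsum1, hsum2]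
  rcases lt_trichotomy j 0 with hneg | hzero | hpos
  · rw [gam, if_neg (by omega), aCoeff, if_pos ⟨hj0, rfl⟩, if_pos hneg]
    ring
  · exact absurd hzero hj0
  · rw [gam, if_pos hpos, aCoeff, if_pos ⟨hj0, rfl⟩, if_neg (by omega)]
    ring

theorem suppDvd_hh [Fact p.Prime] (he : ∀ n, SuppDvd p n (e n)) (n : ℕ) :
    SuppDvd p n (hh p f e n) := by
  rw [suppDvd_def]
  intro m hdvd
  obtain ⟨hm0, hlt⟩ := nu_lt_of_not_dvd p hdvd
  set ν0 := padicValInt p m with hν0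
  have hrev : padicValInt p (-m) = ν0 := by rw [nu_neg]
  have hcoeff : (hh p f e n).coeff m =
      eta p f e m + ∑ μ ∈ Finset.range n, (aCoeff p f e μ (-m) - (e μ).coeff m) := by
    rw [hh, HahnSeries.coeff_add, coeff_sum, h0_coeff]
    simp only [HahnSeries.coeff_sub, aa'_coeff]
  have hsum1 : ∑ μ ∈ Finset.range n, aCoeff p f e μ (-m) = aCoeff p f e ν0 (-m) := by
    apply Finset.sum_eq_single ν0
    · intro μ _ hμ
      rw [aCoeff, if_neg]
      intro hcond
      rw [hrev] at hcond
      omega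
    · intro hnotmem
      exact absurd (Finset.mem_range.mpr (by omega)) hnotmem
  have hsum2 : ∑ μ ∈ Finset.range n, (e μ).coeff m = (Fp e (ν0 + 1)).coeff m := by
    rw [Fp, coeff_sum]
    symm
    apply Finset.sum_subset (Finset.range_subset_range.mpr (by omega))
    intro μ _ hμ
    rw [Finset.mem_range] at hμ
    apply (suppDvd_def.mp (he μ)) m
    intro hdvdm
    have := nu_gt_of_dvd p hm0 hdvdm
    omega
  rw [hcoeff, Finset.sum_sub_distrib, hsum1, hsum2]
  rcases lt_trichotomy m 0 with hneg | hzero | hpos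
  · rw [eta, if_neg (by omega), aCoeff, if_pos ⟨by omega, hrev⟩, if_neg (by omega), neg_neg]
    ring
  · exact absurd hzero hm0
  · rw [eta, if_pos hpos, aCoeff, if_pos ⟨by omega, hrev⟩, if_pos (by omega)]
    ring

end Scalar

section MatrixPart

variable (p : ℕ) {r : ℕ}

/-- joint entrywise solution, by recursion on `j - i` -/
noncomputable def ps (M N : ℕ → Matrix (Fin r) (Fin r) (LaurentSeries k)) (i j : Fin r) :
    (ℕ → LaurentSeries k) × (ℕ → LaurentSeries k) × (ℕ → LaurentSeries k) ×
      (ℕ → LaurentSeries k) :=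
  (fun n => aa p
      (fun n => M n i j + ∑ x ∈ (Finset.Ioo i j).attach,
        (M n i x.1 * (ps M N x.1 j).2.2.1 (n + 1) - (ps M N i x.1).2.2.1 n * (ps M N x.1 j).1 n))
      (fun n => N n i j + ∑ x ∈ (Finset.Ioo i j).attach,
        (N n i x.1 * (ps M N x.1 j).2.2.2 (n + 1) - (ps M N i x.1).2.2.2 n * (ps M N x.1 j).2.1 n))
      n,
   fun n => aa' p
      (fun n => M n i j + ∑ x ∈ (Finset.Ioo i j).attach,
        (M n i x.1 * (ps M N x.1 j).2.2.1 (n + 1) - (ps M N i x.1).2.2.1 n * (ps M N x.1 j).1 n))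
      (fun n => N n i j + ∑ x ∈ (Finset.Ioo i j).attach,
        (N n i x.1 * (ps M N x.1 j).2.2.2 (n + 1) - (ps M N i x.1).2.2.2 n * (ps M N x.1 j).2.1 n))
      n,
   fun n => gg p
      (fun n => M n i j + ∑ x ∈ (Finset.Ioo i j).attach,
        (M n i x.1 * (ps M N x.1 j).2.2.1 (n + 1) - (ps M N i x.1).2.2.1 n * (ps M N x.1 j).1 n))
      (fun n => N n i j + ∑ x ∈ (Finset.Ioo i j).attach,
        (N n i x.1 * (ps M N x.1 j).2.2.2 (n + 1) - (ps M N i x.1).2.2.2 n * (ps M N x.1 j).2.1 n))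
      n,
   fun n => hh p
      (fun n => M n i j + ∑ x ∈ (Finset.Ioo i j).attach,
        (M n i x.1 * (ps M N x.1 j).2.2.1 (n + 1) - (ps M N i x.1).2.2.1 n * (ps M N x.1 j).1 n))
      (fun n => N n i j + ∑ x ∈ (Finset.Ioo i j).attach,
        (N n i x.1 * (ps M N x.1 j).2.2.2 (n + 1) - (ps M N i x.1).2.2.2 n * (ps M N x.1 j).2.1 n))
      n)
termination_by (j : ℕ) - (i : ℕ)
decreasing_by
  all_goals
    obtain ⟨hx1, hx2⟩ := Finset.mem_Ioo.mp x.2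
  all_goals
    rw [Fin.lt_def] at hx1 hx2
  all_goals omega

/-- the modified `t`-side data fed to the scalar solver at position `(i,j)` -/
noncomputable def mtil (M N : ℕ → Matrix (Fin r) (Fin r) (LaurentSeries k)) (i j : Fin r)
    (n : ℕ) : LaurentSeries k :=
  M n i j + ∑ x ∈ (Finset.Ioo i j).attach,
    (M n i x.1 * (ps p M N x.1 j).2.2.1 (n + 1) - (ps p M N i x.1).2.2.1 n * (ps p M N x.1 j).1 n)

/-- the modified `s`-side data fed to the scalar solver at position `(i,j)` -/
noncomputable def ntil (M N : ℕ → Matrix (Fin r) (Fin r) (LaurentSeries k)) (i j : Fin r)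
    (n : ℕ) : LaurentSeries k :=
  N n i j + ∑ x ∈ (Finset.Ioo i j).attach,
    (N n i x.1 * (ps p M N x.1 j).2.2.2 (n + 1) - (ps p M N i x.1).2.2.2 n * (ps p M N x.1 j).2.1 n)

theorem ps_def (M N : ℕ → Matrix (Fin r) (Fin r) (LaurentSeries k)) (i j : Fin r) :
    ps p M N i j =
      (fun n => aa p (mtil p M N i j) (ntil p M N i j) n,
       fun n => aa' p (mtil p M N i j) (ntil p M N i j) n,
       fun n => gg p (mtil p M N i j) (ntil p M N i j) n,
       fun n => hh p (mtil p M N i j) (ntil p M N i j) n) := by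
  rw [ps]
  rfl

end MatrixPart

section MatrixPart2

variable {k : Type*} [Field k] (p : ℕ) {r : ℕ}
variable (M N : ℕ → Matrix (Fin r) (Fin r) (LaurentSeries k))

theorem ps_a (i j : Fin r) (n : ℕ) :
    (ps p M N i j).1 n = aa p (mtil p M N i j) (ntil p M N i j) n := by rw [ps_def]

theorem ps_a' (i j : Fin r) (n : ℕ) :
    (ps p M N i j).2.1 n = aa' p (mtil p M N i j) (ntil p M N i j) n := by rw [ps_def]

theorem ps_g (i j : Fin r) (n : ℕ) :
    (ps p M N i j).2.2.1 n = gg p (mtil p M N i j) (ntil p M N i j) n := by rw [ps_def]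

theorem ps_h (i j : Fin r) (n : ℕ) :
    (ps p M N i j).2.2.2 n = hh p (mtil p M N i j) (ntil p M N i j) n := by rw [ps_def]

theorem ps_eqM (i j : Fin r) (n : ℕ) :
    mtil p M N i j n =
      (ps p M N i j).2.2.1 n + (ps p M N i j).1 n - (ps p M N i j).2.2.1 (n + 1) := by
  rw [ps_g, ps_a, ps_g]
  exact gg_eq p (mtil p M N i j) (ntil p M N i j) n

theorem ps_eqN (i j : Fin r) (n : ℕ) :
    ntil p M N i j n =
      (ps p M N i j).2.2.2 n + (ps p M N i j).2.1 n - (ps p M N i j).2.2.2 (n + 1) := by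
  rw [ps_h, ps_a', ps_h]
  exact hh_eq p (mtil p M N i j) (ntil p M N i j) n

theorem ps_a_finite (i j : Fin r) (n : ℕ) : ((ps p M N i j).1 n).support.Finite := by
  rw [ps_a]
  exact aa_support_finite p _ _ n

theorem ps_rev (i j : Fin r) (n : ℕ) (m : ℤ) :
    ((ps p M N i j).2.1 n).coeff m = ((ps p M N i j).1 n).coeff (-m) := by
  rw [ps_a, ps_a', aa_coeff, aa'_coeff]

theorem ps_spec [Fact p.Prime]
    (hMd : ∀ n (i j : Fin r), SuppDvd p n (M n i j))
    (hNd : ∀ n (i j : Fin r), SuppDvd p n (N n i j)) :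
    ∀ d (i j : Fin r), (j : ℕ) - (i : ℕ) ≤ d →
      (∀ n, SuppDvd p n ((ps p M N i j).1 n)) ∧
      (∀ n, SuppDvd p n ((ps p M N i j).2.1 n)) ∧
      (∀ n, SuppDvd p n ((ps p M N i j).2.2.1 n)) ∧
      (∀ n, SuppDvd p n ((ps p M N i j).2.2.2 n)) := by
  intro d
  induction d with
  | zero =>
    intro i j hij
    have hIoo : Finset.Ioo i j = ∅ := by
      refine Finset.Ioo_eq_empty ?_
      rw [Fin.lt_def]
      omega
    have hm : ∀ n, SuppDvd p n (mtil p M N i j n) := by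
      intro n
      rw [mtil, hIoo]
      simpa using hMd n i j
    have hn : ∀ n, SuppDvd p n (ntil p M N i j n) := by
      intro n
      rw [ntil, hIoo]
      simpa using hNd n i j
    refine ⟨fun n => ?_, fun n => ?_, fun n => ?_, fun n => ?_⟩
    · rw [ps_a]; exact suppDvd_aa p _ _ n
    · rw [ps_a']; exact suppDvd_aa' p _ _ n
    · rw [ps_g]; exact suppDvd_gg p _ _ hm n
    · rw [ps_h]; exact suppDvd_hh p _ _ hn n
  | succ d ih =>
    intro i j hij
    have hm : ∀ n, SuppDvd p n (mtil p M N i j n) := by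
      intro n
      rw [mtil]
      refine suppDvd_add (hMd n i j) (suppDvd_sum _ _ ?_)
      intro x _
      obtain ⟨hx1, hx2⟩ := Finset.mem_Ioo.mp x.2
      rw [Fin.lt_def] at hx1 hx2
      refine suppDvd_sub (suppDvd_mul (hMd n i x.1) ?_) (suppDvd_mul ?_ ?_)
      · exact suppDvd_of_succ ((ih x.1 j (by omega)).2.2.1 (n + 1))
      · exact (ih i x.1 (by omega)).2.2.1 n
      · exact (ih x.1 j (by omega)).1 n
    have hn : ∀ n, SuppDvd p n (ntil p M N i j n) := by
      intro n
      rw [ntil]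
      refine suppDvd_add (hNd n i j) (suppDvd_sum _ _ ?_)
      intro x _
      obtain ⟨hx1, hx2⟩ := Finset.mem_Ioo.mp x.2
      rw [Fin.lt_def] at hx1 hx2
      refine suppDvd_sub (suppDvd_mul (hNd n i x.1) ?_) (suppDvd_mul ?_ ?_)
      · exact suppDvd_of_succ ((ih x.1 j (by omega)).2.2.2 (n + 1))
      · exact (ih i x.1 (by omega)).2.2.2 n
      · exact (ih x.1 j (by omega)).2.1 n
    refine ⟨fun n => ?_, fun n => ?_, fun n => ?_, fun n => ?_⟩
    · rw [ps_a]; exact suppDvd_aa p _ _ n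
    · rw [ps_a']; exact suppDvd_aa' p _ _ n
    · rw [ps_g]; exact suppDvd_gg p _ _ hm n
    · rw [ps_h]; exact suppDvd_hh p _ _ hn n

end MatrixPart2

section MatrixPart3

variable {k : Type*} [Field k] (p : ℕ) {r : ℕ}

/-- build a unipotent upper-triangular matrix sequence from strictly-upper entry data -/
noncomputable def matOf (F : Fin r → Fin r → ℕ → LaurentSeries k) (n : ℕ) :
    Matrix (Fin r) (Fin r) (LaurentSeries k) :=
  Matrix.of fun i j => if i < j then F i j n else if i = j then 1 else 0

theorem matOf_apply (F : Fin r → Fin r → ℕ → LaurentSeries k) (n : ℕ) (i j : Fin r) :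
    matOf F n i j = if i < j then F i j n else if i = j then 1 else 0 := rfl

theorem matOf_diag (F : Fin r → Fin r → ℕ → LaurentSeries k) (n : ℕ) (i : Fin r) :
    matOf F n i i = 1 := by rw [matOf_apply, if_neg (lt_irrefl i), if_pos rfl]

theorem matOf_lower (F : Fin r → Fin r → ℕ → LaurentSeries k) (n : ℕ) {i j : Fin r}
    (h : j < i) : matOf F n i j = 0 := by
  rw [matOf_apply, if_neg (asymm h), if_neg h.ne']

theorem matOf_upper (F : Fin r → Fin r → ℕ → LaurentSeries k) (n : ℕ) {i j : Fin r}
    (h : i < j) : matOf F n i j = F i j n := by rw [matOf_apply, if_pos h]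

theorem key_general (X : ℕ → Matrix (Fin r) (Fin r) (LaurentSeries k))
    (aE gE : Fin r → Fin r → ℕ → LaurentSeries k)
    (hXlow : ∀ n (i j : Fin r), (j : ℕ) < (i : ℕ) → X n i j = 0)
    (hXdiag : ∀ n (i : Fin r), X n i i = 1)
    (hEq : ∀ (i j : Fin r), i < j → ∀ n,
      X n i j + ∑ x ∈ (Finset.Ioo i j).attach,
        (X n i x.1 * gE x.1 j (n + 1) - gE i x.1 n * aE x.1 j n)
      = gE i j n + aE i j n - gE i j (n + 1)) (n : ℕ) :
    X n * matOf gE (n + 1) = matOf gE n * matOf aE n := by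
  refine Matrix.ext fun i j => ?_
  rw [Matrix.mul_apply, Matrix.mul_apply]
  rcases lt_trichotomy i j with hij | rfl | hij
  · -- main case i < j
    have hL : ∑ kk, X n i kk * matOf gE (n + 1) kk j
        = ∑ kk ∈ Finset.Icc i j, X n i kk * matOf gE (n + 1) kk j := by
      refine (Finset.sum_subset (Finset.subset_univ _) ?_).symm
      intro kk _ hkk
      rw [Finset.mem_Icc, not_and_or] at hkk
      rcases hkk with h | h
      · rw [hXlow n i kk (by rw [Fin.le_def] at h; omega), zero_mul]
      · rw [matOf_lower _ _ (lt_of_not_ge h), mul_zero]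
    have hR : ∑ kk, matOf gE n i kk * matOf aE n kk j
        = ∑ kk ∈ Finset.Icc i j, matOf gE n i kk * matOf aE n kk j := by
      refine (Finset.sum_subset (Finset.subset_univ _) ?_).symm
      intro kk _ hkk
      rw [Finset.mem_Icc, not_and_or] at hkk
      rcases hkk with h | h
      · rw [matOf_lower _ _ (lt_of_not_ge h), zero_mul]
      · rw [matOf_lower _ _ (lt_of_not_ge h), mul_zero]
    rw [hL, hR, Finset.Icc_eq_cons_Ioc hij.le, Finset.sum_cons, Finset.sum_cons,
      Finset.Ioc_eq_cons_Ioo hij, Finset.sum_cons, Finset.sum_cons]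
    rw [hXdiag n i, matOf_upper _ _ hij, matOf_diag, matOf_diag, matOf_diag,
      matOf_upper _ _ hij, matOf_upper _ _ hij]
    have hsum1 : ∑ kk ∈ Finset.Ioo i j, X n i kk * matOf gE (n + 1) kk j
        = ∑ kk ∈ Finset.Ioo i j, X n i kk * gE kk j (n + 1) := by
      refine Finset.sum_congr rfl fun kk hkk => ?_
      rw [matOf_upper _ _ (Finset.mem_Ioo.mp hkk).2]
    have hsum2 : ∑ kk ∈ Finset.Ioo i j, matOf gE n i kk * matOf aE n kk j
        = ∑ kk ∈ Finset.Ioo i j, gE i kk n * aE kk j n := by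
      refine Finset.sum_congr rfl fun kk hkk => ?_
      rw [matOf_upper _ _ (Finset.mem_Ioo.mp hkk).1, matOf_upper _ _ (Finset.mem_Ioo.mp hkk).2]
    rw [hsum1, hsum2]
    have hE := hEq i j hij n
    rw [Finset.sum_attach (Finset.Ioo i j)
      (fun kk => X n i kk * gE kk j (n + 1) - gE i kk n * aE kk j n),
      Finset.sum_sub_distrib] at hE
    linear_combination hE
  · -- diagonal case
    have h1 : ∑ kk, X n i kk * matOf gE (n + 1) kk i = 1 := by
      rw [Finset.sum_eq_single i]
      · rw [hXdiag n i, matOf_diag, one_mul]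
      · intro b _ hb
        rcases lt_or_gt_of_ne hb with h | h
        · rw [hXlow n i b (by rw [Fin.lt_def] at h; omega), zero_mul]
        · rw [matOf_lower _ _ h, mul_zero]
      · intro h
        exact absurd (Finset.mem_univ i) h
    have h2 : ∑ kk, matOf gE n i kk * matOf aE n kk i = 1 := by
      rw [Finset.sum_eq_single i]
      · rw [matOf_diag, matOf_diag, one_mul]
      · intro b _ hb
        rcases lt_or_gt_of_ne hb with h | h
        · rw [matOf_lower _ _ h, zero_mul]
        · rw [matOf_lower _ _ h, mul_zero]
      · intro h
        exact absurd (Finset.mem_univ i) h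
    rw [h1, h2]
  · -- lower case j < i
    have h1 : ∑ kk, X n i kk * matOf gE (n + 1) kk j = 0 := by
      refine Finset.sum_eq_zero fun kk _ => ?_
      rcases lt_or_ge kk i with h | h
      · rw [hXlow n i kk (by rw [Fin.lt_def] at h; omega), zero_mul]
      · have : j < kk := lt_of_lt_of_le hij h
        rw [matOf_lower _ _ this, mul_zero]
    have h2 : ∑ kk, matOf gE n i kk * matOf aE n kk j = 0 := by
      refine Finset.sum_eq_zero fun kk _ => ?_
      rcases lt_or_ge kk i with h | h
      · rw [matOf_lower _ _ h, zero_mul]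
      · have : j < kk := lt_of_lt_of_le hij h
        rw [matOf_lower _ _ this, mul_zero]
    rw [h1, h2]

end MatrixPart3

section Assemble

variable {k : Type*} [Field k] (p : ℕ) {r : ℕ}

theorem matOf_det (F : Fin r → Fin r → ℕ → LaurentSeries k) (n : ℕ) :
    (matOf F n).det = 1 := by
  have hbt : (matOf F n).BlockTriangular id := fun i j hji => matOf_lower F n hji
  rw [Matrix.det_of_upperTriangular hbt]
  exact Finset.prod_eq_one fun i _ => matOf_diag F n i

theorem matOf_mul_inv (F : Fin r → Fin r → ℕ → LaurentSeries k) (n : ℕ) :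
    matOf F n * (matOf F n)⁻¹ = 1 :=
  Matrix.mul_nonsing_inv _ (by rw [matOf_det]; exact isUnit_one)

end Assemble

end JointSurj

/-- **Joint surjectivity for unipotent bundles.**
The joint restriction map from `R¹lim Uᵣ(k[t,t⁻¹]^{pⁿ})` to
`R¹lim Uᵣ(k((t))^{pⁿ}) × R¹lim Uᵣ(k((t⁻¹))^{pⁿ})` is surjective: for all sequences
`Mₙ ∈ Uᵣ(k((t))^{pⁿ})` and `Nₙ ∈ Uᵣ(k((s))^{pⁿ})` there are `Aₙ ∈ Uᵣ(k[t,t⁻¹]^{pⁿ})`,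
`gₙ ∈ Uᵣ(k((t))^{pⁿ})` and `hₙ ∈ Uᵣ(k((s))^{pⁿ})` with `Mₙ = gₙ · Aₙ · g_{n+1}⁻¹` and
`Nₙ = hₙ · ι(Aₙ) · h_{n+1}⁻¹` for all `n`. -/
theorem joint_restriction_surjective_unipotent
    (k : Type*) [Field k] [IsAlgClosed k] (p : ℕ) [CharP k p] (hp : 0 < p)
    (r : ℕ) (hr : 1 ≤ r)
    (M N : ℕ → Matrix (Fin r) (Fin r) (LaurentSeries k))
    (hM : ∀ n, MemUrLaurentSeriesPow k p n r (M n))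
    (hN : ∀ n, MemUrLaurentSeriesPow k p n r (N n)) :
    ∃ A A' g h : ℕ → Matrix (Fin r) (Fin r) (LaurentSeries k),
      (∀ n, MemUrLaurentPolyPow k p n r (A n)) ∧
      IsRevMatSeq k r A A' ∧
      (∀ n, MemUrLaurentSeriesPow k p n r (g n)) ∧
      (∀ n, MemUrLaurentSeriesPow k p n r (h n)) ∧
      (∀ n, M n = g n * A n * (g (n + 1))⁻¹) ∧
      (∀ n, N n = h n * A' n * (h (n + 1))⁻¹) := by
  classical
  have hPrime : Fact p.Prime :=
    ⟨(CharP.char_is_prime_or_zero k p).resolve_right (fun h => by omega)⟩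
  haveI := hPrime
  have hMd : ∀ n (i j : Fin r), JointSurj.SuppDvd p n (M n i j) := fun n i j => (hM n).2.2 i j
  have hNd : ∀ n (i j : Fin r), JointSurj.SuppDvd p n (N n i j) := fun n i j => (hN n).2.2 i j
  refine ⟨JointSurj.matOf (fun i j => (JointSurj.ps p M N i j).1),
          JointSurj.matOf (fun i j => (JointSurj.ps p M N i j).2.1),
          JointSurj.matOf (fun i j => (JointSurj.ps p M N i j).2.2.1),
          JointSurj.matOf (fun i j => (JointSurj.ps p M N i j).2.2.2), ?_, ?_, ?_, ?_, ?_, ?_⟩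
  · -- A is unipotent upper-triangular with Laurent-polynomial p^n-th power entries
    intro n
    refine ⟨fun i j hji => JointSurj.matOf_lower _ _ (Fin.lt_def.mpr hji),
            fun i => JointSurj.matOf_diag _ _ _, fun i j => ⟨?_, ?_⟩⟩
    · rcases lt_trichotomy i j with hij | rfl | hij
      · rw [JointSurj.matOf_upper _ _ hij]
        exact JointSurj.ps_a_finite p M N i j n
      · rw [JointSurj.matOf_diag]
        rw [HahnSeries.support_one]
        exact Set.finite_singleton 0
      · rw [JointSurj.matOf_lower _ _ hij]
        simp
    · rcases lt_trichotomy i j with hij | rfl | hij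
      · rw [JointSurj.matOf_upper _ _ hij]
        exact (JointSurj.ps_spec p M N hMd hNd ((j : ℕ) - (i : ℕ)) i j le_rfl).1 n
      · rw [JointSurj.matOf_diag]
        exact JointSurj.suppDvd_one p n
      · rw [JointSurj.matOf_lower _ _ hij]
        exact JointSurj.suppDvd_zero p n
  · -- reversal relation
    intro n i j m
    rcases lt_trichotomy i j with hij | rfl | hij
    · rw [JointSurj.matOf_upper _ _ hij, JointSurj.matOf_upper _ _ hij]
      exact JointSurj.ps_rev p M N i j n m
    · rw [JointSurj.matOf_diag, JointSurj.matOf_diag, HahnSeries.coeff_one, HahnSeries.coeff_one]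
      simp [neg_eq_zero]
    · rw [JointSurj.matOf_lower _ _ hij, JointSurj.matOf_lower _ _ hij]
      simp
  · -- g is unipotent upper-triangular with p^n-th power entries
    intro n
    refine ⟨fun i j hji => JointSurj.matOf_lower _ _ (Fin.lt_def.mpr hji),
            fun i => JointSurj.matOf_diag _ _ _, fun i j => ?_⟩
    rcases lt_trichotomy i j with hij | rfl | hij
    · rw [JointSurj.matOf_upper _ _ hij]
      exact (JointSurj.ps_spec p M N hMd hNd ((j : ℕ) - (i : ℕ)) i j le_rfl).2.2.1 n
    · rw [JointSurj.matOf_diag]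
      exact JointSurj.suppDvd_one p n
    · rw [JointSurj.matOf_lower _ _ hij]
      exact JointSurj.suppDvd_zero p n
  · -- h is unipotent upper-triangular with p^n-th power entries
    intro n
    refine ⟨fun i j hji => JointSurj.matOf_lower _ _ (Fin.lt_def.mpr hji),
            fun i => JointSurj.matOf_diag _ _ _, fun i j => ?_⟩
    rcases lt_trichotomy i j with hij | rfl | hij
    · rw [JointSurj.matOf_upper _ _ hij]
      exact (JointSurj.ps_spec p M N hMd hNd ((j : ℕ) - (i : ℕ)) i j le_rfl).2.2.2 n
    · rw [JointSurj.matOf_diag]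
      exact JointSurj.suppDvd_one p n
    · rw [JointSurj.matOf_lower _ _ hij]
      exact JointSurj.suppDvd_zero p n
  · -- the equation on the t-side
    intro n
    have hkey := JointSurj.key_general M (fun i j => (JointSurj.ps p M N i j).1)
      (fun i j => (JointSurj.ps p M N i j).2.2.1)
      (fun n i j hji => (hM n).1 i j hji) (fun n i => (hM n).2.1 i)
      (fun i j hij n => by
        have h := JointSurj.ps_eqM p M N i j n
        rw [JointSurj.mtil] at h
        exact h) n
    calc M n = M n * (JointSurj.matOf (fun i j => (JointSurj.ps p M N i j).2.2.1) (n + 1) *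
        (JointSurj.matOf (fun i j => (JointSurj.ps p M N i j).2.2.1) (n + 1))⁻¹) := by
          rw [JointSurj.matOf_mul_inv, mul_one]
    _ = (M n * JointSurj.matOf (fun i j => (JointSurj.ps p M N i j).2.2.1) (n + 1)) *
        (JointSurj.matOf (fun i j => (JointSurj.ps p M N i j).2.2.1) (n + 1))⁻¹ := by
          rw [mul_assoc]
    _ = _ := by rw [hkey]
  · -- the equation on the s-side
    intro n
    have hkey := JointSurj.key_general N (fun i j => (JointSurj.ps p M N i j).2.1)
      (fun i j => (JointSurj.ps p M N i j).2.2.2)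
      (fun n i j hji => (hN n).1 i j hji) (fun n i => (hN n).2.1 i)
      (fun i j hij n => by
        have h := JointSurj.ps_eqN p M N i j n
        rw [JointSurj.ntil] at h
        exact h) n
    calc N n = N n * (JointSurj.matOf (fun i j => (JointSurj.ps p M N i j).2.2.2) (n + 1) *
        (JointSurj.matOf (fun i j => (JointSurj.ps p M N i j).2.2.2) (n + 1))⁻¹) := by
          rw [JointSurj.matOf_mul_inv, mul_one]
    _ = (N n * JointSurj.matOf (fun i j => (JointSurj.ps p M N i j).2.2.2) (n + 1)) *
        (JointSurj.matOf (fun i j => (JointSurj.ps p M N i j).2.2.2) (n + 1))⁻¹ := by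
          rw [mul_assoc]
    _ = _ := by rw [hkey]
end

section
/- Let k be an algebraically closed field of characteristic p > 0. For every pair of sequences (a_n)_{n≥0} with a_n ∈ k((t)) and supp(a_n) ⊆ p^nℤ, and (b_n)_{n≥0} with b_n ∈ k((s)) and supp_s(b_n) ⊆ p^nℤ, there exist Laurent polynomials c_n ∈ k[t,t⁻¹] with supp(c_n) ⊆ p^nℤ, elements y_n ∈ k((t)) with supp(y_n) ⊆ p^nℤ, and elements z_n ∈ k((s)) with supp_s(z_n) ⊆ p^nℤ, such that for all n ≥ 0: a_n − c_n = y_n − y_{n+1} in k((t)) and b_n − ι(c_n) = z_n − z_{n+1} in k((s)). (This is the rank-one additive case of the joint surjectivity onto R¹lim_n 𝔾_a(k((t))^{p^n}) × R¹lim_n 𝔾_a(k((t⁻¹))^{p^n}).) -/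
section Aux

variable {k : Type*} [Field k]

/-- Bounded-below subsets of ℤ are partially well ordered. -/
lemma aux_isPWO_of_bddBelow {s : Set ℤ} (N : ℤ) (h : ∀ i ∈ s, N ≤ i) : s.IsPWO :=
  Set.IsWF.isPWO (BddBelow.wellFoundedOn_lt ⟨N, h⟩)

lemma aux_support_bddBelow (x : LaurentSeries k) : ∃ N : ℤ, ∀ i ∈ x.support, N ≤ i := by
  rcases Set.eq_empty_or_nonempty x.support with h | h
  · exact ⟨0, by simp [h]⟩
  · exact ⟨x.isWF_support.min h, fun i hi => x.isWF_support.min_le h hi⟩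

/-- The sub-zero part of a Laurent series support is finite. -/
lemma aux_finite_neg (x : LaurentSeries k) : {i : ℤ | i ≤ 0 ∧ x.coeff i ≠ 0}.Finite := by
  obtain ⟨N, hN⟩ := aux_support_bddBelow x
  apply (Set.finite_Icc N 0).subset
  rintro i ⟨h1, h2⟩
  exact ⟨hN i h2, h1⟩

/-- Key arithmetic fact: if `m ≥ |i|` and `i ≠ 0` then `p^m ∤ i` (for `p ≥ 2`). -/
lemma aux_not_dvd {p : ℕ} (hp : 2 ≤ p) {i : ℤ} (hi : i ≠ 0) {m : ℕ} (hm : i.natAbs ≤ m) :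
    ¬ ((p : ℤ) ^ m ∣ i) := by
  intro hdvd
  have h1 : (p : ℤ) ^ m ≤ |i| := Int.le_of_dvd (abs_pos.mpr hi) ((dvd_abs _ _).mpr hdvd)
  have h2 : (i.natAbs : ℤ) < (p : ℤ) ^ m := by
    have h3 : i.natAbs < p ^ m := lt_of_le_of_lt hm (Nat.lt_pow_self (n := m) (by omega))
    exact_mod_cast h3
  rw [Int.abs_eq_natAbs] at h1
  omega

/-- Telescoping identity for the partial sums defining `y` and `z`. -/
lemma aux_tel {p : ℕ} (hp : 2 ≤ p) (n : ℕ) {i : ℤ} (hi : 0 < i)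
    (F : ℕ → k) (hF : ∀ m, ¬ ((p : ℤ) ^ m ∣ i) → F m = 0) :
    (∑ m ∈ Finset.Ico n i.natAbs, (if ((p : ℤ) ^ m ∣ i) then F m else 0))
      - (∑ m ∈ Finset.Ico (n + 1) i.natAbs, (if ((p : ℤ) ^ m ∣ i) then F m else 0)) = F n := by
  by_cases hn : n < i.natAbs
  · rw [Finset.sum_eq_sum_Ico_succ_bot hn, add_sub_cancel_right]
    split_ifs with h
    · rfl
    · exact (hF n h).symm
  · push_neg at hn
    rw [Finset.Ico_eq_empty (by omega : ¬ n < i.natAbs),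
      Finset.Ico_eq_empty (by omega : ¬ n + 1 < i.natAbs)]
    simpa using (hF n (aux_not_dvd hp hi.ne' hn)).symm

end Aux

/-- The correcting Laurent polynomial: negative (and zero) part of `a n`,
reversed negative part of `b n`. -/
lemma Ccoef_support_finite {k : Type*} [Field k] (a b : ℕ → LaurentSeries k) (n : ℕ) :
    (Function.support fun i : ℤ =>
      if i ≤ 0 then (a n).coeff i else (b n).coeff (-i)).Finite := by
  apply (((aux_finite_neg (a n)).union
    (((aux_finite_neg (b n)).preimage (neg_injective.injOn)))).subset)
  intro i hi
  simp only [Function.mem_support] at hi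
  by_cases h : i ≤ 0
  · left; rw [if_pos h] at hi; exact ⟨h, hi⟩
  · right; rw [if_neg h] at hi; exact ⟨by omega, hi⟩

noncomputable def Cser {k : Type*} [Field k] (a b : ℕ → LaurentSeries k) (n : ℕ) :
    LaurentSeries k where
  coeff i := if i ≤ 0 then (a n).coeff i else (b n).coeff (-i)
  isPWO_support' := (Ccoef_support_finite a b n).isPWO

/-- The image of `Cser` under `t ↦ s⁻¹` (coefficient reversal). -/
noncomputable def Cser' {k : Type*} [Field k] (a b : ℕ → LaurentSeries k) (n : ℕ) :
    LaurentSeries k where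
  coeff j := if -j ≤ 0 then (a n).coeff (-j) else (b n).coeff j
  isPWO_support' := by
    apply Set.Finite.isPWO
    apply ((((aux_finite_neg (a n)).preimage (neg_injective.injOn)).union
      (aux_finite_neg (b n))).subset)
    intro j hj
    simp only [Function.mem_support] at hj
    by_cases h : -j ≤ 0
    · left; rw [if_pos h] at hj; exact ⟨by omega, hj⟩
    · right; rw [if_neg h] at hj; exact ⟨by omega, hj⟩

noncomputable def Yser {k : Type*} [Field k] (p : ℕ) (a b : ℕ → LaurentSeries k) (n : ℕ) :
    LaurentSeries k where
  coeff i := if 0 < i then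
      ∑ m ∈ Finset.Ico n i.natAbs,
        (if ((p : ℤ) ^ m ∣ i) then (a m).coeff i - (b m).coeff (-i) else 0)
    else 0
  isPWO_support' := by
    apply aux_isPWO_of_bddBelow 1
    intro i hi
    simp only [Function.mem_support] at hi
    by_contra h
    rw [if_neg (by omega)] at hi
    exact hi rfl

noncomputable def Zser {k : Type*} [Field k] (p : ℕ) (a b : ℕ → LaurentSeries k) (n : ℕ) :
    LaurentSeries k where
  coeff j := if 0 < j then
      ∑ m ∈ Finset.Ico n j.natAbs,
        (if ((p : ℤ) ^ m ∣ j) then (b m).coeff j - (a m).coeff (-j) else 0)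
    else if j = 0 then -∑ m ∈ Finset.range n, ((b m).coeff 0 - (a m).coeff 0) else 0
  isPWO_support' := by
    apply aux_isPWO_of_bddBelow 0
    intro j hj
    simp only [Function.mem_support] at hj
    by_contra h
    rw [if_neg (by omega), if_neg (by omega)] at hj
    exact hj rfl

/-- **Rank-one additive case of the joint surjectivity.**
For every pair of sequences `(aₙ)` in `k((t))` and `(bₙ)` in `k((s))` with supports in
`pⁿℤ`, there exist Laurent polynomials `cₙ ∈ k[t,t⁻¹]` (elements of `k((t))` with
finite support, here recorded together with their images `c'ₙ = ι(cₙ) ∈ k((s))` under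
`t ↦ s⁻¹`, i.e. with reversed coefficients) with `supp(cₙ) ⊆ pⁿℤ`, and elements
`yₙ ∈ k((t))`, `zₙ ∈ k((s))` with supports in `pⁿℤ`, such that
`aₙ − cₙ = yₙ − y_{n+1}` in `k((t))` and `bₙ − ι(cₙ) = zₙ − z_{n+1}` in `k((s))`
for all `n`. -/
theorem joint_restriction_surjective_rank_one_additive
    (k : Type*) [Field k] [IsAlgClosed k] (p : ℕ) [CharP k p] (hp : 0 < p)
    (a b : ℕ → LaurentSeries k)
    (ha : ∀ n, ∀ i ∈ (a n).support, ((p : ℤ) ^ n) ∣ i)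
    (hb : ∀ n, ∀ i ∈ (b n).support, ((p : ℤ) ^ n) ∣ i) :
    ∃ c c' y z : ℕ → LaurentSeries k,
      (∀ n, (c n).support.Finite ∧ ∀ i ∈ (c n).support, ((p : ℤ) ^ n) ∣ i) ∧
      (∀ n i, (c' n).coeff i = (c n).coeff (-i)) ∧
      (∀ n, ∀ i ∈ (y n).support, ((p : ℤ) ^ n) ∣ i) ∧
      (∀ n, ∀ i ∈ (z n).support, ((p : ℤ) ^ n) ∣ i) ∧
      (∀ n, a n - c n = y n - y (n + 1)) ∧
      (∀ n, b n - c' n = z n - z (n + 1)) := by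
  have hp2 : 2 ≤ p := (CharP.char_prime_of_ne_zero k hp.ne').two_le
  -- contrapositives of the support hypotheses
  have ha' : ∀ n i, ¬ ((p : ℤ) ^ n ∣ i) → (a n).coeff i = 0 := by
    intro n i h
    by_contra hc
    exact h (ha n i hc)
  have hb' : ∀ n i, ¬ ((p : ℤ) ^ n ∣ i) → (b n).coeff i = 0 := by
    intro n i h
    by_contra hc
    exact h (hb n i hc)
  refine ⟨Cser a b, Cser' a b, Yser p a b, Zser p a b, ?_, ?_, ?_, ?_, ?_, ?_⟩
  · -- c : finite support and divisibility
    intro n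
    constructor
    · exact Ccoef_support_finite a b n
    · intro i hi
      simp only [HahnSeries.mem_support, Cser] at hi
      by_cases h : i ≤ 0
      · rw [if_pos h] at hi; exact ha n i hi
      · rw [if_neg h] at hi
        exact (dvd_neg.mp (hb n (-i) hi))
  · -- c' coeff reversal
    intro n i
    simp only [Cser, Cser']
    by_cases h : -i ≤ 0
    · rw [if_pos h, if_pos h]
    · rw [if_neg h, if_neg h, neg_neg]
  · -- y support divisibility
    intro n i hi
    simp only [HahnSeries.mem_support, Yser] at hi
    by_cases h : 0 < i
    · rw [if_pos h] at hi
      obtain ⟨m, hm, hne⟩ := Finset.exists_ne_zero_of_sum_ne_zero hi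
      rw [Finset.mem_Ico] at hm
      have hdvd : (p : ℤ) ^ m ∣ i := by
        by_contra hc
        rw [if_neg hc] at hne
        exact hne rfl
      exact dvd_trans (pow_dvd_pow _ hm.1) hdvd
    · rw [if_neg h] at hi; exact absurd rfl hi
  · -- z support divisibility
    intro n j hj
    simp only [HahnSeries.mem_support, Zser] at hj
    by_cases h : 0 < j
    · rw [if_pos h] at hj
      obtain ⟨m, hm, hne⟩ := Finset.exists_ne_zero_of_sum_ne_zero hj
      rw [Finset.mem_Ico] at hm
      have hdvd : (p : ℤ) ^ m ∣ j := by
        by_contra hc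
        rw [if_neg hc] at hne
        exact hne rfl
      exact dvd_trans (pow_dvd_pow _ hm.1) hdvd
    · by_cases h0 : j = 0
      · subst h0; exact dvd_zero _
      · rw [if_neg h, if_neg h0] at hj; exact absurd rfl hj
  · -- a n - c n = y n - y (n+1)
    intro n
    ext i
    rw [HahnSeries.coeff_sub, HahnSeries.coeff_sub]
    simp only [Cser, Yser]
    by_cases h : 0 < i
    · rw [if_neg (by omega), if_pos h, if_pos h]
      rw [aux_tel hp2 n h (fun m => (a m).coeff i - (b m).coeff (-i))
        (fun m hm => show (a m).coeff i - (b m).coeff (-i) = 0 by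
          rw [ha' m i hm, hb' m (-i) (fun hc => hm (dvd_neg.mp hc)), sub_zero])]
    · rw [if_pos (by omega), if_neg h, if_neg h, sub_self, sub_self]
  · -- b n - c' n = z n - z (n+1)
    intro n
    ext j
    rw [HahnSeries.coeff_sub, HahnSeries.coeff_sub]
    simp only [Cser', Zser]
    by_cases h : 0 < j
    · rw [if_pos (by omega), if_pos h, if_pos h]
      rw [aux_tel hp2 n h (fun m => (b m).coeff j - (a m).coeff (-j))
        (fun m hm => show (b m).coeff j - (a m).coeff (-j) = 0 by
          rw [hb' m j hm, ha' m (-j) (fun hc => hm (dvd_neg.mp hc)), sub_zero])]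
    · by_cases h0 : j = 0
      · subst h0
        rw [if_pos (by omega), if_neg h, if_neg h, if_pos rfl, if_pos rfl,
          Finset.sum_range_succ, neg_zero]
        ring
      · rw [if_neg (by omega), if_neg h, if_neg h, if_neg h0, if_neg h0, sub_self, sub_self]
end

section
/- Let k be an algebraically closed field of characteristic p > 0 and let G be a finite group. Then every irreducible finite-dimensional k-linear representation of G has dimension 1 if and only if G has a normal Sylow p-subgroup P such that the quotient group G/P is abelian. -/
open Module



lemma exists_fixed_vector {k : Type} [Field k] {p : ℕ} [CharP k p] (hp : p.Prime)
    {H : Type} [Group H] [Finite H] (hH : IsPGroup p H)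
    {V : Type} [AddCommGroup V] [Module k V] (σ : Representation k H V)
    {v₀ : V} (hv₀ : v₀ ≠ 0) :
    ∃ v : V, v ≠ 0 ∧ ∀ h : H, σ h v = v := by
  classical
  haveI : NeZero p := ⟨hp.ne_zero⟩
  have hps : ∀ x : V, p • x = 0 := by
    intro x
    rw [← Nat.cast_smul_eq_nsmul k p x, CharP.cast_eq_zero, zero_smul]
  haveI : Module (ZMod p) V := AddCommGroup.zmodModule hps
  set S : Submodule (ZMod p) V := Submodule.span (ZMod p) (Set.range fun h : H => σ h v₀) with hS
  have hv₀S : v₀ ∈ S := by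
    rw [hS]
    exact Submodule.subset_span ⟨1, by simp⟩
  have hstab : ∀ (h : H) (v : V), v ∈ S → σ h v ∈ S := by
    intro h v hv
    induction hv using Submodule.span_induction with
    | mem x hx =>
      obtain ⟨h', rfl⟩ := hx
      rw [hS]
      exact Submodule.subset_span ⟨h * h', by simp [map_mul]⟩
    | zero => simp
    | add x y _ _ hx hy => rw [map_add]; exact S.add_mem hx hy
    | smul c x _ hx =>
      have hmap : σ h (c • x) = c • σ h x := ZMod.map_smul (σ h) c x
      rw [hmap]
      exact S.smul_mem c hx
  haveI : Module.Finite (ZMod p) S :=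
    Module.Finite.span_of_finite _ (Set.finite_range _)
  haveI : Finite S := Module.finite_of_finite (ZMod p)
  letI : MulAction H S :=
    { smul := fun h v => ⟨σ h v, hstab h v v.2⟩
      one_smul := fun v => by ext; simp [HSMul.hSMul, SMul.smul]
      mul_smul := fun g h v => by
        ext; simp [HSMul.hSMul, SMul.smul, map_mul] }
  have hsmul_def : ∀ (h : H) (v : S), (h • v : S) = ⟨σ h v, hstab h v v.2⟩ := fun _ _ => rfl
  haveI : Fact p.Prime := ⟨hp⟩
  have hmod := hH.card_modEq_card_fixedPoints S
  -- p divides card S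
  have hpS : p ∣ Nat.card S := by
    have hx : ((⟨v₀, hv₀S⟩ : S) : V) ≠ 0 := hv₀
    have hxne : (⟨v₀, hv₀S⟩ : S) ≠ 0 := by
      intro h0; apply hx; rw [h0]; rfl
    have h1 : addOrderOf (⟨v₀, hv₀S⟩ : S) ∣ p := by
      apply addOrderOf_dvd_of_nsmul_eq_zero
      ext
      simpa using hps v₀
    have h2 : addOrderOf (⟨v₀, hv₀S⟩ : S) ≠ 1 := by
      simp [AddMonoid.addOrderOf_eq_one_iff, hxne]
    have h3 : addOrderOf (⟨v₀, hv₀S⟩ : S) = p :=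
      ((Nat.dvd_prime hp).mp h1).resolve_left h2
    have h4 := addOrderOf_dvd_natCard (⟨v₀, hv₀S⟩ : S)
    rwa [h3] at h4
  have hpF : p ∣ Nat.card (MulAction.fixedPoints H S) :=
    (Nat.modEq_zero_iff_dvd).mp ((hmod.symm.trans) (Nat.modEq_zero_iff_dvd.mpr hpS))
  -- fixed points nonempty: 0 is fixed
  have h0fix : (0 : S) ∈ MulAction.fixedPoints H S := by
    intro h
    rw [hsmul_def]
    ext; simp
  haveI : Finite (MulAction.fixedPoints H S) := Subtype.finite
  have hcard_pos : 0 < Nat.card (MulAction.fixedPoints H S) :=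
    Nat.card_pos_iff.mpr ⟨⟨⟨0, h0fix⟩⟩, inferInstance⟩
  have hge : 2 ≤ Nat.card (MulAction.fixedPoints H S) := by
    have h2 := hp.two_le
    have := Nat.le_of_dvd hcard_pos hpF
    omega
  -- extract a nonzero fixed point
  have : ∃ x : MulAction.fixedPoints H S, x ≠ ⟨0, h0fix⟩ := by
    by_contra hc
    push_neg at hc
    haveI : Unique (MulAction.fixedPoints H S) :=
      { default := ⟨0, h0fix⟩, uniq := hc }
    have := Nat.card_unique (α := MulAction.fixedPoints H S)
    omega
  obtain ⟨⟨x, hxfix⟩, hxne⟩ := this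
  refine ⟨(x : V), ?_, ?_⟩
  · intro h0
    apply hxne
    apply Subtype.ext
    apply Subtype.ext
    simpa using h0
  · intro h
    have := hxfix h
    rw [hsmul_def] at this
    exact congrArg Subtype.val this


lemma unipotent_aux {k : Type} [Field k] {G : Type} [Group G] [Finite G]
    (hyp : ∀ (V : Type) [AddCommGroup V] [Module k V] [FiniteDimensional k V]
        (ρ : Representation k G V),
        Nontrivial V →
        (∀ W : Submodule k V, (∀ (g : G) (v : V), v ∈ W → ρ g v ∈ W) →
          W = ⊥ ∨ W = ⊤) →
        Module.finrank k V = 1)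
    {g : G} (hg : ∀ χ : G →* kˣ, χ g = 1) :
    ∀ (n : ℕ) (V : Type) [AddCommGroup V] [Module k V] [FiniteDimensional k V]
      (ρ : Representation k G V), finrank k V = n →
      ((ρ g : Module.End k V) - 1) ^ n = 0 := by
  classical
  intro n
  induction n using Nat.strong_induction_on with
  | _ n IH =>
  intro V _ _ _ ρ hn
  rcases Nat.eq_zero_or_pos n with rfl | hpos
  · haveI : Subsingleton V := finrank_zero_iff.mp hn
    exact Subsingleton.elim _ _
  haveI : Nontrivial V := finrank_pos_iff.mp (hn ▸ hpos)
  -- find a minimal nonzero stable submodule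
  set 𝒮 : Set ℕ := {m | ∃ W : Submodule k V, W ≠ ⊥ ∧
      (∀ (x : G) (v : V), v ∈ W → ρ x v ∈ W) ∧ finrank k W = m} with h𝒮
  have h𝒮ne : 𝒮.Nonempty := by
    refine ⟨n, ⊤, ?_, fun x v _ => Submodule.mem_top, by rw [finrank_top]; exact hn⟩
    exact top_ne_bot
  obtain ⟨W, hWne, hWstab, hWrank⟩ : ∃ W : Submodule k V, W ≠ ⊥ ∧
      (∀ (x : G) (v : V), v ∈ W → ρ x v ∈ W) ∧ finrank k W = sInf 𝒮 :=
    Nat.sInf_mem h𝒮ne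
  have hmin : ∀ m ∈ 𝒮, sInf 𝒮 ≤ m := fun m hm => Nat.sInf_le hm
  -- restriction of ρ to W
  set σ : Representation k G W :=
    { toFun := fun x => LinearMap.restrict (ρ x) (fun v hv => hWstab x v hv)
      map_one' := by
        ext v
        simp [LinearMap.restrict_apply]
      map_mul' := fun x y => by
        ext v
        simp [LinearMap.restrict_apply] } with hσ
  have hσapply : ∀ (x : G) (u : W), ((σ x u : W) : V) = ρ x (u : V) := by
    intro x u
    simp [hσ, LinearMap.restrict_apply]
  haveI : Nontrivial W := Submodule.nontrivial_iff_ne_bot.mpr hWne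
  -- W is irreducible
  have hWirr : ∀ U : Submodule k W, (∀ (x : G) (u : W), u ∈ U → σ x u ∈ U) →
      U = ⊥ ∨ U = ⊤ := by
    intro U hU
    by_cases hUbot : U = ⊥
    · exact Or.inl hUbot
    right
    have hU'stab : ∀ (x : G) (v : V), v ∈ U.map W.subtype → ρ x v ∈ U.map W.subtype := by
      rintro x v ⟨u, hu, rfl⟩
      exact ⟨σ x u, hU x u hu, (hσapply x u).symm⟩
    have hU'ne : U.map W.subtype ≠ ⊥ := by
      obtain ⟨u, hu, hune⟩ := (Submodule.ne_bot_iff U).mp hUbot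
      refine (Submodule.ne_bot_iff _).mpr ⟨(u : V), ⟨u, hu, rfl⟩, ?_⟩
      simpa [Submodule.coe_eq_zero] using hune
    have h1 : finrank k (U.map W.subtype) ∈ 𝒮 := ⟨U.map W.subtype, hU'ne, hU'stab, rfl⟩
    have h2 : sInf 𝒮 ≤ finrank k (U.map W.subtype) := hmin _ h1
    rw [Submodule.finrank_map_subtype_eq] at h2
    have h3 : finrank k U ≤ finrank k W := U.finrank_le
    exact Submodule.eq_top_of_finrank_eq (le_antisymm h3 (hWrank ▸ h2))
  have hWone : finrank k W = 1 := hyp W σ inferInstance hWirr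
  -- a basis vector of W
  obtain ⟨w, hwne⟩ := exists_ne (0 : W)
  have hspan : Submodule.span k {w} = (⊤ : Submodule k W) := by
    apply Submodule.eq_top_of_finrank_eq
    rw [finrank_span_singleton hwne, hWone]
  have hmemspan : ∀ u : W, ∃ a : k, u = a • w := by
    intro u
    have : u ∈ Submodule.span k {w} := hspan ▸ Submodule.mem_top
    obtain ⟨a, ha⟩ := Submodule.mem_span_singleton.mp this
    exact ⟨a, ha.symm⟩
  -- the character
  have hc : ∀ x : G, ∃ a : k, σ x w = a • w := fun x => by
    obtain ⟨a, ha⟩ := hmemspan (σ x w); exact ⟨a, ha⟩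
  choose c hcspec using hc
  have hinj : ∀ a b : k, a • w = b • w → a = b := by
    intro a b hab
    by_contra hne
    have : (a - b) • w = 0 := by rw [sub_smul, hab, sub_self]
    rcases smul_eq_zero.mp this with h | h
    · exact hne (sub_eq_zero.mp h)
    · exact hwne h
  have hc1 : c 1 = 1 := by
    apply hinj
    rw [← hcspec 1, map_one, one_smul]
    rfl
  have hcmul : ∀ x y : G, c (x * y) = c x * c y := by
    intro x y
    apply hinj
    rw [← hcspec (x * y), map_mul]
    show σ x (σ y w) = (c x * c y) • w
    rw [hcspec y, map_smul, hcspec x, smul_smul, mul_comm]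
  have hcne : ∀ x : G, c x ≠ 0 := by
    intro x hx
    have h1 : σ x w = 0 := by rw [hcspec x, hx, zero_smul]
    have h2 : σ x⁻¹ (σ x w) = w := by
      have hmul : σ x⁻¹ * σ x = 1 := by rw [← map_mul, inv_mul_cancel, map_one]
      calc σ x⁻¹ (σ x w) = (σ x⁻¹ * σ x) w := rfl
      _ = w := by rw [hmul]; rfl
    rw [h1, map_zero] at h2
    exact hwne h2.symm
  set χ : G →* kˣ :=
    { toFun := fun x => Units.mk0 (c x) (hcne x)
      map_one' := Units.ext (by simp [hc1])
      map_mul' := fun x y => Units.ext (by simp [hcmul]) } with hχ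
  have hcg : c g = 1 := by
    have := hg χ
    rw [hχ] at this
    have := congrArg Units.val this
    simpa using this
  -- g fixes W pointwise
  have hgfix : ∀ v ∈ W, ρ g v = v := by
    intro v hv
    obtain ⟨a, ha⟩ := hmemspan ⟨v, hv⟩
    have : σ g ⟨v, hv⟩ = ⟨v, hv⟩ := by
      rw [ha, map_smul, hcspec g, hcg, one_smul]
    have := congrArg (Subtype.val) this
    rw [hσapply] at this
    exact this
  -- the quotient representation
  set ρQ : Representation k G (V ⧸ W) :=
    { toFun := fun x => Submodule.mapQ W W (ρ x) (fun v hv => hWstab x v hv)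
      map_one' := by
        apply Submodule.linearMap_qext
        ext v
        simp [Submodule.mapQ_apply]
      map_mul' := fun x y => by
        apply Submodule.linearMap_qext
        ext v
        simp [Submodule.mapQ_apply] } with hρQ
  have hρQapply : ∀ (x : G) (v : V), ρQ x (W.mkQ v) = W.mkQ (ρ x v) := by
    intro x v
    simp [hρQ, Submodule.mapQ_apply]
  have hQrank : finrank k (V ⧸ W) = n - 1 := by
    have := Submodule.finrank_quotient_add_finrank W
    omega
  have hQ := IH (n - 1) (by omega) (V ⧸ W) ρQ hQrank
  -- commutation of powers with mkQ
  have hcommpow : ∀ (j : ℕ) (v : V),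
      ((ρQ g - 1) ^ j) (W.mkQ v) = W.mkQ (((ρ g - 1) ^ j) v) := by
    intro j
    induction j with
    | zero => intro v; simp
    | succ j ih =>
      intro v
      rw [pow_succ', pow_succ']
      show (ρQ g - 1) (((ρQ g - 1) ^ j) (W.mkQ v)) = W.mkQ ((ρ g - 1) (((ρ g - 1) ^ j) v))
      rw [ih v]
      rw [LinearMap.sub_apply, LinearMap.sub_apply, hρQapply, map_sub]
      rfl
  -- conclude
  apply LinearMap.ext
  intro v
  have hn1 : n = (n - 1) + 1 := by omega
  rw [hn1, pow_succ']
  have hmem : ((ρ g - 1) ^ (n - 1)) v ∈ W := by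
    have h0 : ((ρQ g - 1) ^ (n - 1)) (W.mkQ v) = 0 := by rw [hQ]; rfl
    rw [hcommpow] at h0
    rwa [W.mkQ_apply, Submodule.Quotient.mk_eq_zero] at h0
  show (ρ g - 1) (((ρ g - 1) ^ (n - 1)) v) = 0
  rw [LinearMap.sub_apply]
  have : ρ g (((ρ g - 1) ^ (n - 1)) v) = ((ρ g - 1) ^ (n - 1)) v := hgfix _ hmem
  rw [this]
  simp

lemma converse_dir {k : Type} [Field k] [IsAlgClosed k] {p : ℕ} [CharP k p] (hp : p.Prime)
    {G : Type} [Group G] [Finite G] (P : Subgroup G) (hPn : P.Normal)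
    (hPp : IsPGroup p P)
    (hab : ∀ a b : G ⧸ P, a * b = b * a)
    (V : Type) [AddCommGroup V] [Module k V] [FiniteDimensional k V]
    (ρ : Representation k G V) (hV : Nontrivial V)
    (irr : ∀ W : Submodule k V, (∀ (g : G) (v : V), v ∈ W → ρ g v ∈ W) → W = ⊥ ∨ W = ⊤) :
    Module.finrank k V = 1 := by
  classical
  -- the invariants under P
  set W : Submodule k V :=
    { carrier := {v | ∀ h ∈ P, ρ h v = v}
      add_mem' := fun {a b} ha hb h hh => by rw [map_add, ha h hh, hb h hh]
      zero_mem' := fun h hh => by rw [map_zero]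
      smul_mem' := fun c v hv h hh => by rw [map_smul, hv h hh] } with hW
  have hWmem : ∀ v : V, v ∈ W ↔ ∀ h ∈ P, ρ h v = v := fun v => Iff.rfl
  -- W is nonzero
  obtain ⟨v₀, hv₀⟩ := exists_ne (0 : V)
  obtain ⟨v, hv, hvfix⟩ := exists_fixed_vector hp hPp (ρ.comp P.subtype) hv₀
  have hvW : v ∈ W := fun h hh => hvfix ⟨h, hh⟩
  -- W is G-stable
  have hWstab : ∀ (g : G) (v : V), v ∈ W → ρ g v ∈ W := by
    intro g v hvmem h hh
    have hconj : g⁻¹ * h * g ∈ P := by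
      have := hPn.conj_mem h hh g⁻¹
      simpa [mul_assoc] using this
    calc ρ h (ρ g v) = ρ (h * g) v := by rw [map_mul]; rfl
    _ = ρ (g * (g⁻¹ * h * g)) v := by group
    _ = ρ g (ρ (g⁻¹ * h * g) v) := by rw [map_mul]; rfl
    _ = ρ g v := by rw [hvmem _ hconj]
  have hWtop : W = ⊤ := by
    rcases irr W hWstab with h | h
    · exact absurd (h ▸ hvW) (by simpa using hv)
    · exact h
  -- every element of P acts trivially
  have htriv : ∀ h ∈ P, ∀ v : V, ρ h v = v := by
    intro h hh v
    have : v ∈ W := hWtop ▸ Submodule.mem_top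
    exact this h hh
  -- all ρ g commute
  have hcomm : ∀ g h : G, ∀ v : V, ρ g (ρ h v) = ρ h (ρ g v) := by
    intro g h v
    have hmkeq : ((h * g)⁻¹ * (g * h)) ∈ P := by
      rw [← QuotientGroup.eq]
      show ((h * g : G) : G ⧸ P) = ((g * h : G) : G ⧸ P)
      rw [QuotientGroup.mk_mul, QuotientGroup.mk_mul]
      exact hab _ _
    have : ρ (g * h) v = ρ (h * g) v := by
      conv_lhs => rw [show (g * h : G) = (h * g) * ((h * g)⁻¹ * (g * h)) by group]
      rw [map_mul]
      show ρ (h * g) (ρ ((h * g)⁻¹ * (g * h)) v) = ρ (h * g) v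
      rw [htriv _ hmkeq]
    calc ρ g (ρ h v) = ρ (g * h) v := by rw [map_mul]; rfl
    _ = ρ (h * g) v := this
    _ = ρ h (ρ g v) := by rw [map_mul]; rfl
  -- each ρ g is a scalar
  have hscalar : ∀ g : G, ∃ c : k, ∀ v : V, ρ g v = c • v := by
    intro g
    obtain ⟨c, hc⟩ := Module.End.exists_eigenvalue (ρ g)
    set E := Module.End.eigenspace (ρ g) c with hE
    have hEne : E ≠ ⊥ := hc
    have hEstab : ∀ (h : G) (v : V), v ∈ E → ρ h v ∈ E := by
      intro h v hv
      rw [Module.End.mem_eigenspace_iff] at hv ⊢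
      rw [hcomm g h v, hv, map_smul]
    rcases irr E hEstab with h | h
    · exact absurd h hEne
    · refine ⟨c, fun v => ?_⟩
      have hmem : v ∈ E := h ▸ Submodule.mem_top
      rw [hE, Module.End.mem_eigenspace_iff] at hmem
      exact hmem
  -- conclude : span of any nonzero vector is stable, hence everything
  obtain ⟨w, hw⟩ := exists_ne (0 : V)
  have hstab2 : ∀ (g : G) (v : V), v ∈ Submodule.span k {w} → ρ g v ∈ Submodule.span k {w} := by
    intro g v hv
    obtain ⟨c, hc⟩ := hscalar g
    rw [hc v]
    exact Submodule.smul_mem _ c hv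
  have hU : Submodule.span k {w} = ⊤ := by
    rcases irr _ hstab2 with h | h
    · exfalso
      have hmem : w ∈ Submodule.span k {w} := Submodule.mem_span_singleton_self w
      rw [h, Submodule.mem_bot] at hmem
      exact hw hmem
    · exact h
  have h1 := finrank_span_singleton (K := k) hw
  rw [hU, finrank_top] at h1
  exact h1

lemma forward_dir {k : Type} [Field k] {p : ℕ} [CharP k p] (hp : 0 < p)
    {G : Type} [Group G] [Finite G]
    (hyp : ∀ (V : Type) [AddCommGroup V] [Module k V] [FiniteDimensional k V]
        (ρ : Representation k G V),
        Nontrivial V →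
        (∀ W : Submodule k V, (∀ (g : G) (v : V), v ∈ W → ρ g v ∈ W) →
          W = ⊥ ∨ W = ⊤) →
        Module.finrank k V = 1) :
    ∃ (P : Subgroup G) (hP : P.Normal),
      Nat.card P = p ^ ((Nat.card G).factorization p) ∧
      (∀ a b : G ⧸ P, a * b = b * a) := by
  classical
  haveI : NeZero p := ⟨hp.ne'⟩
  have hfact : Fact p.Prime := CharP.char_is_prime_of_pos k p
  have hp' : p.Prime := hfact.out
  -- units of k have no p-torsion
  have hknp : ∀ u : kˣ, u ^ p = 1 → u = 1 := by
    intro u hu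
    have h1 : ((u : k) - 1) ^ p = 0 := by
      rw [sub_pow_char, one_pow, ← Units.val_pow_eq_pow_val, hu, Units.val_one, sub_self]
    have h3 := pow_eq_zero_iff hp'.ne_zero |>.mp h1
    rw [sub_eq_zero] at h3
    exact Units.ext h3
  set N : Subgroup G := ⨅ χ : G →* kˣ, χ.ker with hN
  have hmemN : ∀ x : G, x ∈ N ↔ ∀ χ : G →* kˣ, χ x = 1 := by
    intro x
    simp [hN, Subgroup.mem_iInf, MonoidHom.mem_ker]
  have hNnormal : N.Normal := by
    constructor
    intro x hx y
    rw [hmemN] at hx ⊢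
    intro χ
    rw [map_mul, map_mul, hx χ, mul_one, map_inv, mul_inv_cancel]
  -- the quotient is abelian
  have hNab : ∀ a b : G ⧸ N, a * b = b * a := by
    haveI := hNnormal
    intro a b
    obtain ⟨x, rfl⟩ := QuotientGroup.mk_surjective a
    obtain ⟨y, rfl⟩ := QuotientGroup.mk_surjective b
    rw [← QuotientGroup.mk_mul, ← QuotientGroup.mk_mul]
    rw [QuotientGroup.eq]
    rw [hmemN]
    intro χ
    simp only [map_mul, map_inv]
    rw [mul_comm (χ x) (χ y)]
    group
  -- p does not divide the order of the quotient
  haveI := hNnormal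
  have hpq : ¬ p ∣ Nat.card (G ⧸ N) := by
    intro hdvd
    obtain ⟨x, hx⟩ := exists_prime_orderOf_dvd_card' p hdvd
    obtain ⟨x₀, rfl⟩ := QuotientGroup.mk_surjective x
    have hxne : (x₀ : G ⧸ N) ≠ 1 := by
      intro h
      rw [h, orderOf_one] at hx
      exact hp'.ne_one hx.symm
    have hx₀ : x₀ ∉ N := fun h => hxne ((QuotientGroup.eq_one_iff x₀).mpr h)
    obtain ⟨χ, hχ⟩ : ∃ χ : G →* kˣ, χ x₀ ≠ 1 := by
      by_contra hc
      push_neg at hc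
      exact hx₀ ((hmemN x₀).mpr hc)
    have hxp : x₀ ^ p ∈ N := by
      rw [← QuotientGroup.eq_one_iff]
      have hcast : ((x₀ ^ p : G) : G ⧸ N) = ((x₀ : G ⧸ N)) ^ p := by simp
      rw [hcast, ← hx, pow_orderOf_eq_one]
    have : χ x₀ ^ p = 1 := by
      rw [← map_pow]
      exact (hmemN _).mp hxp χ
    exact hχ (hknp _ this)
  -- N is a p-group, via the regular representation
  have hNp : IsPGroup p N := by
    rintro ⟨x, hxN⟩
    have hg : ∀ χ : G →* kˣ, χ x = 1 := (hmemN x).mp hxN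
    set V := MonoidAlgebra k G with hV
    haveI : Fintype G := Fintype.ofFinite G
    set ρ : Representation k G V := Representation.ofMulAction k G G with hρ
    set n := finrank k V with hn
    have hunip := unipotent_aux hyp hg n V ρ rfl
    -- pass to p-th power exponent
    have hnle : n ≤ p ^ n := le_of_lt (Nat.lt_pow_self (n := n) hp'.one_lt)
    have hunip2 : ((ρ x : Module.End k V) - 1) ^ (p ^ n) = 0 := by
      calc ((ρ x : Module.End k V) - 1) ^ (p ^ n)
          = ((ρ x : Module.End k V) - 1) ^ (p ^ n - n) * ((ρ x : Module.End k V) - 1) ^ n := by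
            rw [← pow_add]
            congr 1
            omega
      _ = 0 := by rw [hunip, mul_zero]
    haveI : Nontrivial V := MonoidAlgebra.instNontrivial
    haveI : CharP (Module.End k V) p :=
      charP_of_injective_algebraMap (algebraMap k (Module.End k V)).injective p
    have hpow : (ρ x : Module.End k V) ^ (p ^ n) = 1 := by
      have := sub_pow_char_pow_of_commute (R := Module.End k V) (p := p) (n := n)
        (x := (ρ x : Module.End k V)) (y := 1) (Commute.one_right _)
      rw [hunip2, one_pow] at this
      have := this.symm
      rwa [sub_eq_zero] at this
    have hxpow : x ^ (p ^ n) = 1 := by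
      have hρpow : ρ (x ^ (p ^ n)) = 1 := by rw [map_pow, hpow]
      by_contra hne
      have h1 : ρ (x ^ p ^ n) (MonoidAlgebra.single 1 1) = MonoidAlgebra.single (x ^ p ^ n) 1 := by
        rw [hρ]
        rw [Representation.ofMulAction_single]
        simp
      rw [hρpow] at h1
      have h2 : (MonoidAlgebra.single (1 : G) (1 : k)) = MonoidAlgebra.single (x ^ p ^ n) 1 := h1
      exact hne (MonoidAlgebra.single_left_injective one_ne_zero h2).symm
    exact ⟨n, by ext; simpa [SubmonoidClass.coe_pow] using hxpow⟩
  -- compute the cardinality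
  obtain ⟨a, ha⟩ := (IsPGroup.iff_card (p := p) (G := N)).mp hNp
  refine ⟨N, hNnormal, ?_, hNab⟩
  have hmul : Nat.card N * N.index = Nat.card G := Subgroup.card_mul_index N
  have hidx : N.index = Nat.card (G ⧸ N) := Subgroup.index_eq_card N
  have hidxne : N.index ≠ 0 := Subgroup.index_ne_zero_of_finite
  have hfac : (Nat.card G).factorization p = a := by
    rw [← hmul, ha, Nat.factorization_mul (pow_ne_zero _ hp'.ne_zero) hidxne]
    rw [Finsupp.add_apply]
    rw [hp'.factorization_pow, Finsupp.single_eq_same]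
    rw [Nat.factorization_eq_zero_of_not_dvd (by rw [hidx]; exact hpq)]
    omega
  rw [hfac, ha]


/-- The quotient group `G ⧸ P` (for a normal subgroup `P`) is abelian. -/
def QuotientIsAbelian (G : Type) [Group G] (P : Subgroup G) (hP : P.Normal) : Prop :=
  haveI := hP
  ∀ a b : G ⧸ P, a * b = b * a

/-- **Characterization of finite groups all of whose irreducible representations in
characteristic `p` have dimension one (Proposition 4.2).**
Let `k` be an algebraically closed field of characteristic `p > 0` and `G` a finite
group.  Every irreducible finite-dimensional `k`-linear representation of `G` has
dimension `1` iff `G` has a normal Sylow `p`-subgroup `P` (a subgroup whose order is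
the largest power of `p` dividing `|G|`) with `G ⧸ P` abelian. -/
theorem all_irreducible_reps_one_dimensional_iff
    (k : Type) [Field k] [IsAlgClosed k] (p : ℕ) [CharP k p] (hp : 0 < p)
    (G : Type) [Group G] [Finite G] :
    (∀ (V : Type) [AddCommGroup V] [Module k V] [FiniteDimensional k V]
        (ρ : Representation k G V),
        Nontrivial V →
        (∀ W : Submodule k V, (∀ (g : G) (v : V), v ∈ W → ρ g v ∈ W) →
          W = ⊥ ∨ W = ⊤) →
        Module.finrank k V = 1)
      ↔ ∃ (P : Subgroup G) (hP : P.Normal),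
          Nat.card P = p ^ ((Nat.card G).factorization p) ∧
          QuotientIsAbelian G P hP := by
  haveI : NeZero p := ⟨hp.ne'⟩
  have hfact : Fact p.Prime := CharP.char_is_prime_of_pos k p
  have hp' : p.Prime := hfact.out
  constructor
  · intro hyp
    obtain ⟨P, hPn, hcard, hab⟩ := forward_dir hp hyp
    exact ⟨P, hPn, hcard, hab⟩
  · rintro ⟨P, hPn, hcard, hab⟩
    intro V _ _ _ ρ hV irr
    exact converse_dir hp' P hPn (IsPGroup.of_card hcard) hab V ρ hV irr
end
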